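/- Let G be a finite group and A ≤ G a subgroup. Let K = A\G be the set of right cosets of A in G, with right G-action (Ag)·g′ = A(gg′), and let K^A := {k ∈ K : k·a = k for all a ∈ A}. Then |Hom(A,ℂˣ)| · |K^A| = |G| if and only if A is abelian and normal in G. (Here Hom(A,ℂˣ) is the group of group homomorphisms from A to the multiplicative group of nonzero complex numbers.) -/

import Mathlib

/-- The right action of `g' ∈ G` on the set `K = A\G` of right cosets:
`(Ag)·g' = A(gg')`. -/
def cosetAct {G : Type*} [Group G] (A : Subgroup G) (g' : G) :
    Quotient (QuotientGroup.rightRel A) → Quotient (QuotientGroup.rightRel A) :=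
  Quotient.map (· * g') (by
    intro x y h
    have h' : y * x⁻¹ ∈ A := QuotientGroup.rightRel_apply.mp h
    show (QuotientGroup.rightRel A) (x * g') (y * g')
    rw [QuotientGroup.rightRel_apply]
    simpa [mul_assoc] using h')

/-- The number of homomorphisms from a finite group to `ℂˣ` equals the cardinality of
its abelianization. -/
lemma card_hom_eq_card_abelianization (H : Type*) [Group H] [Finite H] :
    Nat.card (H →* ℂˣ) = Nat.card (Abelianization H) := by
  haveI : NeZero ((Monoid.exponent (Abelianization H) : ℂ)) :=
    ⟨Nat.cast_ne_zero.mpr (Monoid.exponent_ne_zero_of_finite)⟩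
  obtain ⟨e⟩ := CommGroup.monoidHom_mulEquiv_of_hasEnoughRootsOfUnity (Abelianization H) ℂ
  rw [Nat.card_congr (Abelianization.lift (A := ℂˣ)), Nat.card_congr e.toEquiv]

/-- Membership criterion: a coset `⟦g⟧` is fixed by the right `A`-action iff `g` normalizes
`A`. -/
lemma fixed_iff_mem_normalizer {G : Type*} [Group G] [Fintype G] (A : Subgroup G) (g : G) :
    (∀ a : A, cosetAct A (a : G) (Quotient.mk _ g) = Quotient.mk _ g) ↔
      g ∈ Subgroup.normalizer (A : Set G) := by
  have key : ∀ a : A, cosetAct A (a : G) (Quotient.mk _ g)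
      = (Quotient.mk _ (g * (a : G)) : Quotient (QuotientGroup.rightRel A)) := fun a => rfl
  constructor
  · intro h
    apply Subgroup.mem_normalizer_fintype (S := (A : Set G))
    intro n hn
    have := h ⟨n, hn⟩
    rw [key, Quotient.eq] at this
    have h' := QuotientGroup.rightRel_apply.mp this
    -- h' : g * (g * n)⁻¹ ∈ A
    simpa [mul_assoc] using A.inv_mem h'
  · intro hg a
    rw [key, Quotient.eq, QuotientGroup.rightRel_apply]
    have : g * (a : G)⁻¹ * g⁻¹ ∈ A :=
      (Subgroup.mem_normalizer_iff.mp hg _).mp (A.inv_mem a.2)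
    simpa [mul_assoc] using this

/-- For a finite group `G` with a subgroup `A`, letting
`K = A\G` with its right `G`-action and `K^A = {k ∈ K : k·a = k for all a ∈ A}`,
one has `|Hom(A,ℂˣ)| · |K^A| = |G|` if and only if `A` is abelian and normal in `G`. -/
theorem statement13 (G : Type*) [Group G] [Fintype G] (A : Subgroup G) :
    Nat.card (A →* ℂˣ) *
        Nat.card {k : Quotient (QuotientGroup.rightRel A) //
          ∀ a : A, cosetAct A (a : G) k = k} =
      Nat.card G ↔ ((∀ x ∈ A, ∀ y ∈ A, x * y = y * x) ∧ A.Normal) := by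
  classical
  set N := Subgroup.normalizer (A : Set G) with hN
  have hAle : A ≤ N := Subgroup.le_normalizer
  -- the fixed points correspond to the right cosets of `A` in its normalizer
  let f : Quotient (QuotientGroup.rightRel (A.subgroupOf N)) →
      {k : Quotient (QuotientGroup.rightRel A) // ∀ a : A, cosetAct A (a : G) k = k} :=
    fun q => Quotient.liftOn q
      (fun n : N => ⟨Quotient.mk _ (n : G), (fixed_iff_mem_normalizer A _).mpr n.2⟩)
      (by
        intro n m h
        have h' : ((m * n⁻¹ : N) : G) ∈ A :=
          Subgroup.mem_subgroupOf.mp (QuotientGroup.rightRel_apply.mp h)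
        apply Subtype.ext
        apply Quotient.sound
        show (QuotientGroup.rightRel A) (n : G) (m : G)
        rw [QuotientGroup.rightRel_apply]
        simpa using h')
  have hf : Function.Bijective f := by
    constructor
    · intro q₁ q₂ hq
      induction q₁ using Quotient.inductionOn with | h n =>
      induction q₂ using Quotient.inductionOn with | h m =>
      have hq' : (Quotient.mk _ (n : G) : Quotient (QuotientGroup.rightRel A))
          = Quotient.mk _ (m : G) := congrArg Subtype.val hq
      have h' : (m : G) * (n : G)⁻¹ ∈ A :=
        QuotientGroup.rightRel_apply.mp (Quotient.exact hq')
      apply Quotient.sound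
      show (QuotientGroup.rightRel (A.subgroupOf N)) n m
      rw [QuotientGroup.rightRel_apply]
      exact Subgroup.mem_subgroupOf.mpr (by simpa using h')
    · rintro ⟨k, hk⟩
      obtain ⟨g, rfl⟩ := Quotient.exists_rep k
      have hg : g ∈ N := (fixed_iff_mem_normalizer A g).mp hk
      exact ⟨Quotient.mk _ (⟨g, hg⟩ : N), rfl⟩
  have hF : Nat.card {k : Quotient (QuotientGroup.rightRel A) //
        ∀ a : A, cosetAct A (a : G) k = k} = (A.subgroupOf N).index := by
    rw [← Nat.card_congr (Equiv.ofBijective f hf)]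
    exact Nat.card_congr (QuotientGroup.quotientRightRelEquivQuotientLeftRel _)
  have h1 : Nat.card (A.subgroupOf N) * (A.subgroupOf N).index = Nat.card N :=
    Subgroup.card_mul_index _
  have h2 : Nat.card (A.subgroupOf N) = Nat.card A :=
    Nat.card_congr (Subgroup.subgroupOfEquivOfLe hAle).toEquiv
  have h3 : Nat.card N * N.index = Nat.card G := Subgroup.card_mul_index _
  have h4 : Nat.card (A →* ℂˣ) * Nat.card (commutator A) = Nat.card A := by
    rw [card_hom_eq_card_abelianization]
    exact (Subgroup.card_eq_card_quotient_mul_card_subgroup (commutator A)).symm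
  have key : Nat.card (A →* ℂˣ) *
      Nat.card {k : Quotient (QuotientGroup.rightRel A) //
        ∀ a : A, cosetAct A (a : G) k = k} *
      (Nat.card (commutator A) * N.index) = Nat.card G := by
    rw [hF]
    calc Nat.card (A →* ℂˣ) * (A.subgroupOf N).index *
          (Nat.card (commutator A) * N.index)
        = (Nat.card (A →* ℂˣ) * Nat.card (commutator A)) *
            (A.subgroupOf N).index * N.index := by ring
      _ = Nat.card A * (A.subgroupOf N).index * N.index := by rw [h4]
      _ = Nat.card (A.subgroupOf N) * (A.subgroupOf N).index * N.index := by rw [h2]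
      _ = Nat.card N * N.index := by rw [h1]
      _ = Nat.card G := h3
  have hGpos : 0 < Nat.card G := Nat.card_pos
  constructor
  · intro h
    rw [h] at key
    have h5 : Nat.card G * (Nat.card (commutator A) * N.index) = Nat.card G * 1 := by
      rw [mul_one]; exact key
    have hmul : Nat.card (commutator A) * N.index = 1 :=
      Nat.eq_of_mul_eq_mul_left hGpos h5
    have hc : Nat.card (commutator A) = 1 := Nat.dvd_one.mp ⟨N.index, hmul.symm⟩
    have hi : N.index = 1 :=
      Nat.dvd_one.mp ⟨Nat.card (commutator A), by rw [mul_comm]; exact hmul.symm⟩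
    have hcbot : commutator A = ⊥ := Subgroup.card_eq_one.mp hc
    have hNtop : N = ⊤ := Subgroup.index_eq_one.mp hi
    refine ⟨?_, Subgroup.normalizer_eq_top_iff.mp hNtop⟩
    intro x hx y hy
    open commutatorElement in
    have hmem : ⁅(⟨x, hx⟩ : A), (⟨y, hy⟩ : A)⁆ ∈ commutator A :=
      Subgroup.commutator_mem_commutator (Subgroup.mem_top _) (Subgroup.mem_top _)
    rw [hcbot, Subgroup.mem_bot, commutatorElement_eq_one_iff_mul_comm] at hmem
    exact congrArg Subtype.val hmem
  · rintro ⟨hcomm, hnorm⟩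
    have hcbot : commutator A = ⊥ := by
      rw [commutator_def, eq_bot_iff]
      rw [Subgroup.commutator_le]
      intro g₁ _ g₂ _
      rw [Subgroup.mem_bot, commutatorElement_eq_one_iff_mul_comm]
      exact Subtype.ext (hcomm g₁ g₁.2 g₂ g₂.2)
    have hNtop : N = ⊤ := Subgroup.normalizer_eq_top_iff.mpr hnorm
    rw [← key, hcbot, hNtop]
    simp
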